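/- For integers b ≥ 3 and n ≥ 2^b, the sum of binomial coefficients C(n, j) for j = 0 to ⌊n/2^b⌋ is at most 2^(n−b). -/

import Mathlib

lemma ratio_step (n j c : ℕ) (h : c * (j + 1) ≤ n - j) :
    c * n.choose j ≤ n.choose (j + 1) := by
  have key : n.choose (j + 1) * (j + 1) = n.choose j * (n - j) := Nat.choose_succ_right_eq n j
  have h2 : c * n.choose j * (j + 1) ≤ n.choose (j + 1) * (j + 1) := by
    calc c * n.choose j * (j + 1) = n.choose j * (c * (j + 1)) := by ring
    _ ≤ n.choose j * (n - j) := Nat.mul_le_mul_left _ h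
    _ = n.choose (j + 1) * (j + 1) := key.symm
  exact Nat.le_of_mul_le_mul_right h2 (Nat.succ_pos j)

lemma geom_sum (n m : ℕ) (h : ∀ j < m, 7 * n.choose j ≤ n.choose (j + 1)) :
    6 * ∑ j ∈ Finset.range (m + 1), n.choose j ≤ 7 * n.choose m := by
  induction m with
  | zero => simp
  | succ m ih =>
    have ih' := ih (fun j hj => h j (Nat.lt_succ_of_lt hj))
    rw [Finset.sum_range_succ, Nat.mul_add]
    have h7 : 7 * n.choose m ≤ n.choose (m + 1) := h m (Nat.lt_succ_self m)
    omega

lemma pow3_le (n m k : ℕ) (h : ∀ j, m ≤ j → j < m + k → 3 * n.choose j ≤ n.choose (j + 1)) :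
    3 ^ k * n.choose m ≤ n.choose (m + k) := by
  induction k with
  | zero => simp
  | succ k ih =>
    have ih' := ih (fun j hj hj2 => h j hj (by omega))
    calc 3 ^ (k + 1) * n.choose m = 3 * (3 ^ k * n.choose m) := by ring
    _ ≤ 3 * n.choose (m + k) := Nat.mul_le_mul_left _ ih'
    _ ≤ n.choose (m + k + 1) := h (m + k) (by omega) (by omega)
    _ = n.choose (m + (k + 1)) := by ring_nf

lemma choose_le_two_pow (n k : ℕ) : n.choose k ≤ 2 ^ n := by
  rcases le_or_gt k n with h | h
  · calc n.choose k ≤ ∑ j ∈ Finset.range (n + 1), n.choose j :=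
        Finset.single_le_sum (fun i _ => Nat.zero_le _) (Finset.mem_range.mpr (by omega))
    _ = 2 ^ n := Nat.sum_range_choose n
  · rw [Nat.choose_eq_zero_of_lt h]; positivity

lemma three_mul_le_two_pow (b : ℕ) (hb : 4 ≤ b) : 3 * b ≤ 2 ^ b := by
  induction b with
  | zero => omega
  | succ b ih =>
    rcases Nat.lt_or_ge b 4 with h | h
    · interval_cases b <;> first | omega | norm_num
    · have := ih (by omega)
      have : 2 ^ b ≥ 3 := le_trans (by omega) this
      rw [pow_succ]; omega

lemma seven_two_le_six_three (b : ℕ) (hb : 3 ≤ b) : 7 * 2 ^ b ≤ 6 * 3 ^ b := by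
  induction b with
  | zero => omega
  | succ b ih =>
    rcases Nat.lt_or_ge b 3 with h | h
    · interval_cases b <;> first | omega | norm_num
    · have := ih h
      rw [pow_succ, pow_succ]; omega

lemma exp_arith (b m : ℕ) (hb : 3 ≤ b) (hm : 1 ≤ m) (hmb : m < b) :
    1 + b + (b + m) * m ≤ 2 ^ b * m := by
  rcases Nat.lt_or_ge b 4 with h | h
  · have hb3 : b = 3 := by omega
    subst hb3
    interval_cases m <;> norm_num
  · have h3b : 3 * b ≤ 2 ^ b := three_mul_le_two_pow b h
    nlinarith [Nat.mul_le_mul_left m h3b, hm, hmb]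

theorem binomial_approx (b n : ℕ) (hb : 3 ≤ b) (hn : 2 ^ b ≤ n) :
    ∑ j ∈ Finset.range (n / 2 ^ b + 1), n.choose j ≤ 2 ^ (n - b) := by
  set m := n / 2 ^ b with hm_def
  set S := ∑ j ∈ Finset.range (m + 1), n.choose j with hS_def
  have hpow_pos : 0 < 2 ^ b := Nat.pow_pos (n := b) (by norm_num)
  have hm1 : 1 ≤ m := (Nat.one_le_div_iff hpow_pos).mpr hn
  have hmul : m * 2 ^ b ≤ n := Nat.div_mul_le_self n (2 ^ b)
  have h8b : 8 ≤ 2 ^ b := by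
    calc (8 : ℕ) = 2 ^ 3 := by norm_num
    _ ≤ 2 ^ b := Nat.pow_le_pow_right (by norm_num) hb
  have h8m : 8 * m ≤ n := le_trans (by nlinarith) hmul
  have hbn : b ≤ n := le_trans (le_of_lt (Nat.lt_two_pow_self (n := b))) hn
  -- geometric bound
  have hgeom : 6 * S ≤ 7 * n.choose m := by
    apply geom_sum
    intro j hj
    apply ratio_step
    omega
  have h2n : 2 ^ n = 2 ^ b * 2 ^ (n - b) := by
    rw [← pow_add]; congr 1; omega
  rcases Nat.lt_or_ge m b with hsmall | hlarge
  · -- small case : m < b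
    have hS2 : S ≤ 2 * n.choose m := by omega
    have hcp : n.choose m ≤ n ^ m := Nat.choose_le_pow n m
    have hnlt : n < 2 ^ b * (m + 1) := by
      have : n / 2 ^ b < m + 1 := by omega
      calc n < (m + 1) * 2 ^ b := (Nat.div_lt_iff_lt_mul hpow_pos).mp this
      _ = 2 ^ b * (m + 1) := by ring
    have hm2 : m + 1 ≤ 2 ^ m := Nat.lt_two_pow_self (n := m)
    have hn_le : n ≤ 2 ^ (b + m) := by
      calc n ≤ 2 ^ b * (m + 1) := le_of_lt hnlt
      _ ≤ 2 ^ b * 2 ^ m := Nat.mul_le_mul_left _ hm2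
      _ = 2 ^ (b + m) := (pow_add 2 b m).symm
    have hnm : n ^ m ≤ 2 ^ ((b + m) * m) := by
      calc n ^ m ≤ (2 ^ (b + m)) ^ m := Nat.pow_le_pow_left hn_le m
      _ = 2 ^ ((b + m) * m) := by rw [← pow_mul]
    have hexp : 1 + b + (b + m) * m ≤ 2 ^ b * m := exp_arith b m hb hm1 hsmall
    have hchain : 2 ^ b * S ≤ 2 ^ b * 2 ^ (n - b) := by
      calc 2 ^ b * S ≤ 2 ^ b * (2 * n.choose m) := Nat.mul_le_mul_left _ (le_trans hS2 (by omega))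
      _ ≤ 2 ^ b * (2 * n ^ m) := Nat.mul_le_mul_left _ (Nat.mul_le_mul_left _ hcp)
      _ ≤ 2 ^ b * (2 * 2 ^ ((b + m) * m)) := Nat.mul_le_mul_left _ (Nat.mul_le_mul_left _ hnm)
      _ = 2 ^ (b + 1 + (b + m) * m) := by rw [pow_add, pow_add]; ring
      _ ≤ 2 ^ (2 ^ b * m) := Nat.pow_le_pow_right (by norm_num) (by omega)
      _ ≤ 2 ^ n := Nat.pow_le_pow_right (by norm_num) (by nlinarith)
      _ = 2 ^ b * 2 ^ (n - b) := h2n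
    exact Nat.le_of_mul_le_mul_left hchain hpow_pos
  · -- large case : b ≤ m
    have hpow3 : 3 ^ m * n.choose m ≤ n.choose (m + m) := by
      apply pow3_le
      intro j hj hj2
      apply ratio_step
      omega
    have hc2 : n.choose (m + m) ≤ 2 ^ n := choose_le_two_pow n (m + m)
    have h76 : 7 * 2 ^ b ≤ 6 * 3 ^ m := by
      calc 7 * 2 ^ b ≤ 6 * 3 ^ b := seven_two_le_six_three b hb
      _ ≤ 6 * 3 ^ m := Nat.mul_le_mul_left _ (Nat.pow_le_pow_right (by norm_num) hlarge)
    have hchain : (6 * 3 ^ m) * S ≤ (6 * 3 ^ m) * 2 ^ (n - b) := by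
      calc (6 * 3 ^ m) * S = 3 ^ m * (6 * S) := by ring
      _ ≤ 3 ^ m * (7 * n.choose m) := Nat.mul_le_mul_left _ hgeom
      _ = 7 * (3 ^ m * n.choose m) := by ring
      _ ≤ 7 * n.choose (m + m) := Nat.mul_le_mul_left _ hpow3
      _ ≤ 7 * 2 ^ n := Nat.mul_le_mul_left _ hc2
      _ = (7 * 2 ^ b) * 2 ^ (n - b) := by rw [h2n]; ring
      _ ≤ (6 * 3 ^ m) * 2 ^ (n - b) := Nat.mul_le_mul_right _ h76
    exact Nat.le_of_mul_le_mul_left hchain (by positivity)
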